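/- Suppose Tr(A) ⊕ d⁻ ⊗ C ⊗ A* ⊗ b ≤ 0 for an n×n max-plus matrix A, column-regular C, vector b, and regular d. Then Tr(A) ⊕ d⁻ ⊗ C ⊗ A* ⊗ b = d⁻ ⊗ C ⊗ b ⊕ max_{1≤m≤n} tr( A^m ⊗ (I ⊕ b ⊗ d⁻ ⊗ C) ). -/

import Mathlib

noncomputable section

/-- Max-plus carrier: ℝ ∪ {-∞}. Addition ⊕ is `max`, multiplication ⊗ is `+`
(with ⊥ = -∞ absorbing), zero is ⊥ and unit is `(0 : ℝ)`. -/
abbrev MP := WithBot ℝ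

/-- Multiplicative conjugate: negate a finite value, send -∞ to -∞. -/
def mpInv (a : MP) : MP := a.map (fun t => -t)

/-- Max-plus matrix product. -/
def mpMulM {l m n : ℕ} (A : Fin l → Fin m → MP) (B : Fin m → Fin n → MP) :
    Fin l → Fin n → MP := fun i j => Finset.univ.sup fun k => A i k + B k j

/-- Max-plus matrix-vector product. -/
def mpMulV {m n : ℕ} (A : Fin m → Fin n → MP) (x : Fin n → MP) : Fin m → MP :=
  fun i => Finset.univ.sup fun j => A i j + x j

/-- Max-plus identity matrix. -/
def mpId {n : ℕ} : Fin n → Fin n → MP := fun i j => if i = j then ((0:ℝ) : MP) else ⊥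

/-- Max-plus matrix power. -/
def mpPow {n : ℕ} (A : Fin n → Fin n → MP) : ℕ → (Fin n → Fin n → MP)
  | 0 => mpId
  | k+1 => mpMulM (mpPow A k) A

/-- Max-plus trace. -/
def mpTr {n : ℕ} (A : Fin n → Fin n → MP) : MP := Finset.univ.sup fun i => A i i

/-- Tr(A) = tr A ⊕ tr A² ⊕ ⋯ ⊕ tr Aⁿ. -/
def mpTR {n : ℕ} (A : Fin n → Fin n → MP) : MP :=
  (Finset.Icc 1 n).sup fun m => mpTr (mpPow A m)

/-- Kleene star A* = I ⊕ A ⊕ ⋯ ⊕ A^{n-1}. -/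
def mpStar {n : ℕ} (A : Fin n → Fin n → MP) : Fin n → Fin n → MP :=
  fun i j => (Finset.range n).sup fun k => mpPow A k i j

/-- Max-plus spectral radius λ = max_{1≤m≤n} tr(A^m)^{1/m}. -/
def mpLam {n : ℕ} (A : Fin n → Fin n → MP) : MP :=
  (Finset.Icc 1 n).sup fun m => (mpTr (mpPow A m)).map (fun t => t / (m : ℝ))

/-- The alternating product B^{i₀} A B^{i₁} A ⋯ A B^{iₖ}. -/
def mpChain {n : ℕ} (A B : Fin n → Fin n → MP) : (k : ℕ) → (Fin (k+1) → ℕ) → (Fin n → Fin n → MP)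
  | 0, i => mpPow B (i 0)
  | (k+1), i => mpMulM (mpChain A B k (fun j => i j.castSucc)) (mpMulM A (mpPow B (i (Fin.last (k+1)))))

section Helpers

lemma mp_sup_add {ι : Type*} (s : Finset ι) (f : ι → MP) (a : MP) :
    s.sup f + a = s.sup fun x => f x + a := by
  induction s using Finset.cons_induction with
  | empty => simp [WithBot.bot_add]
  | cons i s hi ih => simp only [Finset.sup_cons, ← ih]; exact (max_add_add_right _ _ _).symm

lemma mp_add_sup {ι : Type*} (s : Finset ι) (f : ι → MP) (a : MP) :
    a + s.sup f = s.sup fun x => a + f x := by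
  induction s using Finset.cons_induction with
  | empty => simp [WithBot.add_bot]
  | cons i s hi ih => simp only [Finset.sup_cons, ← ih]; exact (max_add_add_left _ _ _).symm

lemma mp_sup_max {ι : Type*} (s : Finset ι) (f g : ι → MP) :
    s.sup (fun k => max (f k) (g k)) = max (s.sup f) (s.sup g) := by
  exact (Finset.sup_sup (s := s) (f := f) (g := g))

/-- Path weight: product of A-entries along g from position a, length l. -/
def mpPW {n : ℕ} (A : Fin n → Fin n → MP) (g : ℕ → Fin n) (a l : ℕ) : MP :=
  ∑ u ∈ Finset.Ico a (a + l), A (g u) (g (u + 1))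

lemma mpPW_le_pow {n : ℕ} (A : Fin n → Fin n → MP) (g : ℕ → Fin n) (a : ℕ) :
    ∀ l, mpPW A g a l ≤ mpPow A l (g a) (g (a + l)) := by
  intro l
  induction l with
  | zero => simp [mpPW, mpPow, mpId]
  | succ l ih =>
      have hsplit : mpPW A g a (l + 1) = mpPW A g a l + A (g (a + l)) (g (a + l + 1)) := by
        unfold mpPW
        rw [show a + (l + 1) = (a + l) + 1 from rfl, Finset.sum_Ico_succ_top (by omega)]
      rw [hsplit]
      calc mpPW A g a l + A (g (a + l)) (g (a + l + 1))
          ≤ mpPow A l (g a) (g (a + l)) + A (g (a + l)) (g (a + l + 1)) :=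
            add_le_add_left ih _
        _ ≤ mpPow A (l + 1) (g a) (g (a + (l + 1))) := by
            show _ ≤ mpMulM (mpPow A l) A _ _
            unfold mpMulM
            exact Finset.le_sup (f := fun k => mpPow A l (g a) k + A k (g (a + (l+1))))
              (Finset.mem_univ (g (a + l)))

lemma pow_eq_path {n : ℕ} (A : Fin n → Fin n → MP) :
    ∀ (m' : ℕ) (p q : Fin n), mpPow A m' p q ≠ ⊥ →
      ∃ g : ℕ → Fin n, g 0 = p ∧ g m' = q ∧ mpPow A m' p q = mpPW A g 0 m' := by
  intro m'
  induction m' with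
  | zero =>
      intro p q hne
      have hpq : p = q := by
        by_contra hc
        exact hne (by simp [mpPow, mpId, hc])
      refine ⟨fun _ => p, rfl, hpq, ?_⟩
      simp [mpPow, mpId, hpq, mpPW]
  | succ l ih =>
      intro p q hne
      have hne' : Finset.univ.Nonempty := ⟨p, Finset.mem_univ p⟩
      obtain ⟨k, -, hk⟩ := Finset.exists_mem_eq_sup Finset.univ hne'
        (fun k => mpPow A l p k + A k q)
      have hpow : mpPow A (l + 1) p q = mpPow A l p k + A k q := hk
      have hlb : mpPow A l p k ≠ ⊥ := by
        intro hb
        exact hne (by rw [hpow, hb, WithBot.bot_add])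
      obtain ⟨g, hg0, hgl, hgw⟩ := ih p k hlb
      refine ⟨fun u => if u ≤ l then g u else q, by simp [hg0], by simp, ?_⟩
      have hterm : ∀ u ∈ Finset.Ico 0 (0 + l),
          A ((fun u => if u ≤ l then g u else q) u) ((fun u => if u ≤ l then g u else q) (u+1))
          = A (g u) (g (u + 1)) := by
        intro u hu
        simp only [Finset.mem_Ico, zero_add] at hu
        show A (if u ≤ l then g u else q) (if u + 1 ≤ l then g (u+1) else q) = _
        rw [if_pos (by omega), if_pos (by omega)]
      have hsum : mpPW A (fun u => if u ≤ l then g u else q) 0 (l + 1)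
          = mpPW A g 0 l + A k q := by
        unfold mpPW
        rw [show 0 + (l + 1) = (0 + l) + 1 from rfl, Finset.sum_Ico_succ_top (by omega)]
        congr 1
        · exact Finset.sum_congr rfl hterm
        · show A (if 0 + l ≤ l then g (0+l) else q) (if 0 + l + 1 ≤ l then g (0+l+1) else q) = A k q
          rw [if_pos (by omega), if_neg (by omega)]
          simp [hgl]
      rw [hsum, hpow, hgw]

lemma pow_le_star {n : ℕ} (A : Fin n → Fin n → MP) (hTr : mpTR A ≤ ((0:ℝ):MP)) :
    ∀ (m' : ℕ) (p q : Fin n), mpPow A m' p q ≤ mpStar A p q := by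
  intro m'
  induction m' using Nat.strong_induction_on with
  | _ m' ih =>
  intro p q
  by_cases hm : m' < n
  · exact Finset.le_sup (f := fun k => mpPow A k p q) (Finset.mem_range.mpr hm)
  push_neg at hm
  by_cases hb : mpPow A m' p q = ⊥
  · exact hb ▸ bot_le
  obtain ⟨g, hg0, hgm, hgw⟩ := pow_eq_path A m' p q hb
  have hn : 0 < n := p.pos
  obtain ⟨u, v, huv, hguv⟩ := Fintype.exists_ne_map_eq_of_card_lt
      (fun u : Fin (n+1) => g u.val) (by simp)
  obtain ⟨s, t, hst, htn, hg_eq⟩ : ∃ s t : ℕ, s < t ∧ t ≤ n ∧ g s = g t := by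
    rcases Ne.lt_or_gt huv with hlt | hlt
    · exact ⟨u.val, v.val, hlt, Nat.lt_succ_iff.mp v.isLt, hguv⟩
    · exact ⟨v.val, u.val, hlt, Nat.lt_succ_iff.mp u.isLt, hguv.symm⟩
  have htm' : t ≤ m' := le_trans htn hm
  set m2 := m' - (t - s) with hm2def
  have hsm2 : s ≤ m2 := by omega
  have hsplit : mpPW A g 0 m' = (mpPW A g 0 s + mpPW A g s (t - s)) + mpPW A g t (m' - t) := by
    unfold mpPW
    simp only [zero_add]
    rw [show s + (t - s) = t from by omega, show t + (m' - t) = m' from by omega,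
      Finset.sum_Ico_consecutive _ (Nat.zero_le s) hst.le,
      Finset.sum_Ico_consecutive _ (Nat.zero_le t) htm']
  have hmid : mpPW A g s (t - s) ≤ (0 : MP) := by
    calc mpPW A g s (t - s) ≤ mpPow A (t - s) (g s) (g (s + (t - s))) := mpPW_le_pow A g s (t - s)
      _ = mpPow A (t - s) (g s) (g s) := by rw [show s + (t - s) = t from by omega, ← hg_eq]
      _ ≤ mpTr (mpPow A (t - s)) := Finset.le_sup (f := fun i => mpPow A (t - s) i i) (Finset.mem_univ (g s))
      _ ≤ mpTR A := Finset.le_sup (f := fun k => mpTr (mpPow A k))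
          (Finset.mem_Icc.mpr ⟨by omega, by omega⟩)
      _ ≤ (0 : MP) := hTr
  set g' : ℕ → Fin n := fun u => if u < s then g u else g (u + (t - s)) with hg'def
  have hg'0 : g' 0 = p := by
    rcases Nat.eq_zero_or_pos s with hs0 | hs0
    · simp only [hg'def]
      rw [if_neg (by omega), zero_add]
      subst hs0
      rw [Nat.sub_zero, ← hg_eq, hg0]
    · simp only [hg'def]
      rw [if_pos hs0, hg0]
  have hg'm : g' m2 = q := by
    simp only [hg'def]
    rw [if_neg (by omega), show m2 + (t - s) = m' from by omega, hgm]
  have hrest : mpPW A g 0 s + mpPW A g t (m' - t) = mpPW A g' 0 m2 := by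
    unfold mpPW
    simp only [zero_add]
    rw [← Finset.sum_Ico_consecutive (fun u => A (g' u) (g' (u + 1))) (Nat.zero_le s) hsm2]
    congr 1
    · apply Finset.sum_congr rfl
      intro x hx
      simp only [Finset.mem_Ico] at hx
      simp only [hg'def]
      by_cases hx1 : x + 1 < s
      · rw [if_pos (by omega), if_pos hx1]
      · have hxs : x + 1 = s := by omega
        rw [if_pos (by omega), if_neg (by omega), hxs,
          show s + (t - s) = t from by omega, ← hg_eq]
    · rw [Finset.sum_Ico_eq_sum_range, Finset.sum_Ico_eq_sum_range,
        show m2 - s = m' - t from by omega, show t + (m' - t) - t = m' - t from by omega]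
      apply Finset.sum_congr rfl
      intro x hx
      simp only [hg'def]
      rw [if_neg (by omega), if_neg (by omega),
        show s + x + (t - s) = t + x from by omega,
        show s + x + 1 + (t - s) = t + x + 1 from by omega]
  calc mpPow A m' p q = mpPW A g 0 m' := hgw
    _ = (mpPW A g 0 s + mpPW A g s (t - s)) + mpPW A g t (m' - t) := hsplit
    _ ≤ (mpPW A g 0 s + 0) + mpPW A g t (m' - t) :=
        add_le_add_left (add_le_add_right hmid _) _
    _ = mpPW A g 0 s + mpPW A g t (m' - t) := by rw [add_zero]
    _ = mpPW A g' 0 m2 := hrest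
    _ ≤ mpPow A m2 (g' 0) (g' (0 + m2)) := mpPW_le_pow A g' 0 m2
    _ = mpPow A m2 p q := by rw [zero_add, hg'0, hg'm]
    _ ≤ mpStar A p q := ih m2 (by omega) p q

/-- The row vector d⁻ ⊗ C. -/
def mpR {m n : ℕ} (C : Fin m → Fin n → MP) (d : Fin m → ℝ) : Fin n → MP :=
  fun q => Finset.univ.sup fun i => ((-(d i) : ℝ) : MP) + C i q

/-- The scalar r ⊗ A^k ⊗ b. -/
def mpS {m n : ℕ} (A : Fin n → Fin n → MP) (C : Fin m → Fin n → MP)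
    (b : Fin n → MP) (d : Fin m → ℝ) (k : ℕ) : MP :=
  Finset.univ.sup fun p => Finset.univ.sup fun q => mpR C d p + (mpPow A k p q + b q)

lemma lemTL {m n : ℕ} (A : Fin n → Fin n → MP) (C : Fin m → Fin n → MP)
    (b : Fin n → MP) (d : Fin m → ℝ) :
    (Finset.univ.sup fun j =>
      (Finset.univ.sup fun i => ((-(d i) : ℝ) : MP) + mpMulM C (mpStar A) i j) + b j)
    = (Finset.range n).sup (mpS A C b d) := by
  apply le_antisymm
  · apply Finset.sup_le; intro j _
    rw [mp_sup_add]
    apply Finset.sup_le; intro i _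
    rw [show mpMulM C (mpStar A) i j = Finset.univ.sup (fun k => C i k + mpStar A k j) from rfl,
      mp_add_sup, mp_sup_add]
    apply Finset.sup_le; intro k _
    rw [show mpStar A k j = (Finset.range n).sup (fun l => mpPow A l k j) from rfl,
      mp_add_sup, mp_add_sup, mp_sup_add]
    apply Finset.sup_le; intro l hl
    refine le_trans ?_ (Finset.le_sup hl)
    calc (((-(d i) : ℝ) : MP) + (C i k + mpPow A l k j)) + b j
        = (((-(d i) : ℝ) : MP) + C i k) + (mpPow A l k j + b j) := by abel
      _ ≤ mpR C d k + (mpPow A l k j + b j) :=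
          add_le_add_left (Finset.le_sup (f := fun i => ((-(d i) : ℝ) : MP) + C i k)
            (Finset.mem_univ i)) _
      _ ≤ mpS A C b d l :=
          le_trans (Finset.le_sup (f := fun q => mpR C d k + (mpPow A l k q + b q))
              (Finset.mem_univ j))
            (Finset.le_sup (f := fun p => Finset.univ.sup
              fun q => mpR C d p + (mpPow A l p q + b q)) (Finset.mem_univ k))
  · apply Finset.sup_le; intro l hl
    apply Finset.sup_le; intro p _
    apply Finset.sup_le; intro q _
    rw [show mpR C d p = Finset.univ.sup (fun i => ((-(d i) : ℝ) : MP) + C i p) from rfl,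
      mp_sup_add]
    apply Finset.sup_le; intro i _
    refine le_trans ?_ (Finset.le_sup (f := fun j =>
      (Finset.univ.sup fun i => ((-(d i) : ℝ) : MP) + mpMulM C (mpStar A) i j) + b j)
      (Finset.mem_univ q))
    refine le_trans ?_ (add_le_add_left (Finset.le_sup
      (f := fun i => ((-(d i) : ℝ) : MP) + mpMulM C (mpStar A) i q) (Finset.mem_univ i)) _)
    calc (((-(d i) : ℝ) : MP) + C i p) + (mpPow A l p q + b q)
        = (((-(d i) : ℝ) : MP) + (C i p + mpPow A l p q)) + b q := by abel
      _ ≤ (((-(d i) : ℝ) : MP) + mpMulM C (mpStar A) i q) + b q := by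
          refine add_le_add_left (add_le_add_right ?_ _) _
          refine le_trans (add_le_add_right (Finset.le_sup
            (f := fun l => mpPow A l p q) hl) _) ?_
          exact Finset.le_sup (f := fun k => C i k + mpStar A k q) (Finset.mem_univ p)

lemma lemRB {m n : ℕ} (A : Fin n → Fin n → MP) (C : Fin m → Fin n → MP)
    (b : Fin n → MP) (d : Fin m → ℝ) :
    (Finset.univ.sup fun j =>
      (Finset.univ.sup fun i => ((-(d i) : ℝ) : MP) + C i j) + b j)
    = mpS A C b d 0 := by
  have inner : ∀ p : Fin n,
      (Finset.univ.sup fun q => mpR C d p + (mpPow A 0 p q + b q)) = mpR C d p + b p := by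
    intro p
    apply le_antisymm
    · apply Finset.sup_le; intro q _
      by_cases hq : p = q
      · subst hq; simp [mpPow, mpId]
      · simp [mpPow, mpId, hq, WithBot.bot_add, WithBot.add_bot]
    · refine le_trans ?_ (Finset.le_sup (f := fun q => mpR C d p + (mpPow A 0 p q + b q))
        (Finset.mem_univ p))
      simp [mpPow, mpId]
  show _ = Finset.univ.sup fun p => Finset.univ.sup fun q => mpR C d p + (mpPow A 0 p q + b q)
  rw [Finset.sup_congr rfl (fun p _ => inner p)]
  rfl

lemma lemRT {m n : ℕ} (A : Fin n → Fin n → MP) (C : Fin m → Fin n → MP)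
    (b : Fin n → MP) (d : Fin m → ℝ) (k : ℕ) :
    mpTr (mpMulM (mpPow A k)
      (fun p q => max (mpId p q) (b p + (Finset.univ.sup fun i => ((-(d i) : ℝ) : MP) + C i q))))
    = max (mpTr (mpPow A k)) (mpS A C b d k) := by
  have inner : ∀ p : Fin n,
      (Finset.univ.sup fun q => mpPow A k p q + max (mpId q p) (b q + mpR C d p))
      = max (mpPow A k p p) (Finset.univ.sup fun q => mpR C d p + (mpPow A k p q + b q)) := by
    intro p
    rw [Finset.sup_congr rfl (fun q _ => (max_add_add_left (mpPow A k p q) (mpId q p)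
      (b q + mpR C d p)).symm), mp_sup_max]
    congr 1
    · apply le_antisymm
      · apply Finset.sup_le; intro q _
        by_cases hq : q = p
        · subst hq; simp [mpId]
        · simp [mpId, hq, WithBot.add_bot]
      · refine le_trans ?_ (Finset.le_sup (f := fun q => mpPow A k p q + mpId q p)
          (Finset.mem_univ p))
        simp [mpId]
    · exact Finset.sup_congr rfl (fun q _ => by abel)
  show (Finset.univ.sup fun p =>
      Finset.univ.sup fun q => mpPow A k p q + max (mpId q p) (b q + mpR C d p)) = _
  rw [Finset.sup_congr rfl (fun p _ => inner p), mp_sup_max]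
  rfl

end Helpers

/-- Alternative representation of Δ = Tr(A) ⊕ d⁻ C A* b when Δ ≤ 𝟙. -/
theorem maxplus_Delta_representation {m n : ℕ} (A : Fin n → Fin n → MP)
    (C : Fin m → Fin n → MP) (hC : ∀ j, ∃ i, C i j ≠ ⊥)
    (b : Fin n → MP) (d : Fin m → ℝ)
    (h : max (mpTR A)
        (Finset.univ.sup fun j =>
          (Finset.univ.sup fun i => ((-(d i) : ℝ) : MP) + mpMulM C (mpStar A) i j) + b j)
      ≤ ((0:ℝ) : MP)) :
    max (mpTR A)
        (Finset.univ.sup fun j =>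
          (Finset.univ.sup fun i => ((-(d i) : ℝ) : MP) + mpMulM C (mpStar A) i j) + b j)
      =
    max (Finset.univ.sup fun j =>
          (Finset.univ.sup fun i => ((-(d i) : ℝ) : MP) + C i j) + b j)
        ((Finset.Icc 1 n).sup fun k =>
          mpTr (mpMulM (mpPow A k)
            (fun p q => max (mpId p q)
              (b p + (Finset.univ.sup fun i => ((-(d i) : ℝ) : MP) + C i q))))) := by
  have hTr0 : mpTR A ≤ ((0:ℝ) : MP) := le_trans (le_max_left _ _) h
  have hSn : mpS A C b d n ≤ (Finset.range n).sup (mpS A C b d) := by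
    apply Finset.sup_le; intro p _
    apply Finset.sup_le; intro q _
    calc mpR C d p + (mpPow A n p q + b q)
        ≤ mpR C d p + (mpStar A p q + b q) :=
          add_le_add_right (add_le_add_left (pow_le_star A hTr0 n p q) _) _
      _ = (Finset.range n).sup (fun l => mpR C d p + (mpPow A l p q + b q)) := by
          rw [show mpStar A p q = (Finset.range n).sup (fun l => mpPow A l p q) from rfl,
            mp_sup_add, mp_add_sup]
      _ ≤ (Finset.range n).sup (mpS A C b d) := by
          apply Finset.sup_le; intro l hl
          refine le_trans ?_ (Finset.le_sup hl)
          exact le_trans (Finset.le_sup (f := fun q => mpR C d p + (mpPow A l p q + b q))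
              (Finset.mem_univ q))
            (Finset.le_sup (f := fun p => Finset.univ.sup
              fun q => mpR C d p + (mpPow A l p q + b q)) (Finset.mem_univ p))
  rw [lemTL A C b d, lemRB A C b d,
    Finset.sup_congr rfl (fun k _ => lemRT A C b d k), mp_sup_max,
    show ((Finset.Icc 1 n).sup fun k => mpTr (mpPow A k)) = mpTR A from rfl,
    max_left_comm,
    show max (mpS A C b d 0) ((Finset.Icc 1 n).sup (mpS A C b d))
        = (Finset.range (n+1)).sup (mpS A C b d) from by
      rw [show Finset.range (n+1) = insert 0 (Finset.Icc 1 n) from by ext x; simp; omega,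
        Finset.sup_insert],
    Finset.range_add_one, Finset.sup_insert, max_eq_right hSn]
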